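/- arXiv:2407.09524 — 4 statements merged into one kernel-verified Lean document; each statement's English description precedes it below -/
import Mathlib

section
/- For matrices A and B with the same number of rows, if the column spaces of A and B are orthogonal (every column of A is orthogonal to every column of B), then ‖[A,B]‖_* = ‖A‖_* + ‖B‖_*. -/
open Matrix BigOperators

/-- The singular values of a real `d × n` matrix, defined as the square roots of the
eigenvalues of `M * Mᴴ`. -/
noncomputable def singularValues {d : ℕ} {n : Type*} [Fintype n]
    (M : Matrix (Fin d) n ℝ) : Fin d → ℝ :=
  fun i => Real.sqrt ((Matrix.isHermitian_mul_conjTranspose_self M).eigenvalues i)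

/-- The nuclear norm (sum of singular values). -/
noncomputable def nuclearNorm {d : ℕ} {n : Type*} [Fintype n]
    (M : Matrix (Fin d) n ℝ) : ℝ :=
  ∑ i, singularValues M i

/-- The column space of a matrix: the span of its columns. -/
def colSpace {d : ℕ} {n : Type*} (M : Matrix (Fin d) n ℝ) : Submodule ℝ (Fin d → ℝ) :=
  Submodule.span ℝ (Set.range fun j => fun i => M i j)

noncomputable def Matrix.PosSemidef.sqrt {d : ℕ} {P : Matrix (Fin d) (Fin d) ℝ}
    (hP : P.PosSemidef) : Matrix (Fin d) (Fin d) ℝ :=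
  (hP.1.eigenvectorUnitary : Matrix (Fin d) (Fin d) ℝ) *
    diagonal ((↑) ∘ Real.sqrt ∘ hP.1.eigenvalues) * (star hP.1.eigenvectorUnitary : Matrix (Fin d) (Fin d) ℝ)

open scoped MatrixOrder in
lemma Matrix.PosSemidef.sqrt_eq_cfc {d : ℕ} {P : Matrix (Fin d) (Fin d) ℝ}
    (hP : P.PosSemidef) : hP.sqrt = CFC.sqrt P := by
  rw [CFC.sqrt_eq_real_sqrt P hP.nonneg, cfcₙ_eq_cfc, hP.1.cfc_eq, Matrix.IsHermitian.cfc,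
    Matrix.PosSemidef.sqrt]
  simp [Unitary.conjStarAlgAut_apply]
  rfl

open scoped MatrixOrder in
lemma Matrix.PosSemidef.posSemidef_sqrt {d : ℕ} {P : Matrix (Fin d) (Fin d) ℝ}
    (hP : P.PosSemidef) : hP.sqrt.PosSemidef := by
  rw [hP.sqrt_eq_cfc]; exact (CFC.sqrt_nonneg P).posSemidef

open scoped MatrixOrder in
lemma Matrix.PosSemidef.sqrt_mul_self {d : ℕ} {P : Matrix (Fin d) (Fin d) ℝ}
    (hP : P.PosSemidef) : hP.sqrt * hP.sqrt = P := by
  rw [hP.sqrt_eq_cfc]; exact CFC.sqrt_mul_sqrt_self P hP.nonneg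

open scoped MatrixOrder in
lemma Matrix.PosSemidef.eq_sqrt_of_sq_eq {d : ℕ} {P Q : Matrix (Fin d) (Fin d) ℝ}
    (hQ : Q.PosSemidef) (hP : P.PosSemidef) (h : Q ^ 2 = P) : Q = hP.sqrt := by
  rw [hP.sqrt_eq_cfc, ← h, sq]; exact (CFC.sqrt_mul_self Q hQ.nonneg).symm

/-- trace of the psd square root equals the sum of sqrt of eigenvalues. -/
lemma trace_sqrt {d : ℕ} {P : Matrix (Fin d) (Fin d) ℝ} (hP : P.PosSemidef) :
    (hP.sqrt).trace = ∑ i, Real.sqrt (hP.1.eigenvalues i) := by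
  rw [Matrix.PosSemidef.sqrt, Matrix.trace_mul_cycle,
    Unitary.coe_star_mul_self, Matrix.one_mul, Matrix.trace_diagonal]
  rfl

lemma sqrt_congr {d : ℕ} {P Q : Matrix (Fin d) (Fin d) ℝ} (h : P = Q)
    (hP : P.PosSemidef) (hQ : Q.PosSemidef) : hP.sqrt = hQ.sqrt := by
  subst h; rfl

lemma nuclearNorm_eq_trace_sqrt {d : ℕ} {k : Type*} [Fintype k] (M : Matrix (Fin d) k ℝ) :
    nuclearNorm M = (Matrix.posSemidef_self_mul_conjTranspose M).sqrt.trace := by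
  rw [trace_sqrt]; rfl

lemma trace_mul_conjTranspose_self_eq_zero' {d n : ℕ} {M : Matrix (Fin d) (Fin n) ℝ}
    (h : (M * Mᴴ).trace = 0) : M = 0 := by
  have : ∑ i, ∑ j, (M i j) ^ 2 = 0 := by
    simpa [Matrix.trace, Matrix.mul_apply, Matrix.diag, sq] using h
  ext i j
  have h1 : ∀ i ∈ Finset.univ, (0:ℝ) ≤ ∑ j, (M i j) ^ 2 := fun i _ =>
    Finset.sum_nonneg fun j _ => sq_nonneg _
  have h2 := (Finset.sum_eq_zero_iff_of_nonneg h1).mp this i (Finset.mem_univ i)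
  have h3 := (Finset.sum_eq_zero_iff_of_nonneg
    (fun j _ => sq_nonneg (M i j))).mp h2 j (Finset.mem_univ j)
  exact pow_eq_zero_iff (two_ne_zero) |>.mp h3

lemma sqrt_mul_sqrt_eq_zero {d : ℕ} {P Q : Matrix (Fin d) (Fin d) ℝ}
    (hP : P.PosSemidef) (hQ : Q.PosSemidef) (hPQ : P * Q = 0) :
    hP.sqrt * hQ.sqrt = 0 := by
  apply trace_mul_conjTranspose_self_eq_zero'
  have hPs : hP.sqrt.PosSemidef := hP.posSemidef_sqrt
  have hQs : hQ.sqrt.PosSemidef := hQ.posSemidef_sqrt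
  have hH : (hP.sqrt * hQ.sqrt)ᴴ = hQ.sqrt * hP.sqrt := by
    rw [Matrix.conjTranspose_mul, hPs.1, hQs.1]
  rw [hH, show (hP.sqrt * hQ.sqrt) * (hQ.sqrt * hP.sqrt)
      = hP.sqrt * (hQ.sqrt * hQ.sqrt) * hP.sqrt by simp only [Matrix.mul_assoc],
    hQ.sqrt_mul_self, Matrix.trace_mul_cycle, hP.sqrt_mul_self, hPQ, Matrix.trace_zero]

theorem nuclearNorm_fromColumns_eq_of_orthogonal {d n m : ℕ}
    (A : Matrix (Fin d) (Fin n) ℝ) (B : Matrix (Fin d) (Fin m) ℝ)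
    (horth : ∀ (j : Fin n) (j' : Fin m), ∑ i, A i j * B i j' = 0) :
    nuclearNorm (Matrix.fromCols A B) = nuclearNorm A + nuclearNorm B := by
  have hAB : Aᴴ * B = 0 := by
    ext j j'
    simpa [Matrix.mul_apply, Matrix.conjTranspose_apply] using horth j j'
  set P := A * Aᴴ with hPdef
  set Q := B * Bᴴ with hQdef
  have hP : P.PosSemidef := Matrix.posSemidef_self_mul_conjTranspose A
  have hQ : Q.PosSemidef := Matrix.posSemidef_self_mul_conjTranspose B
  have hPQ : P * Q = 0 := by
    rw [hPdef, hQdef, Matrix.mul_assoc, ← Matrix.mul_assoc Aᴴ, hAB]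
    simp
  have hQP : Q * P = 0 := by
    have := congrArg Matrix.conjTranspose hPQ
    rwa [Matrix.conjTranspose_mul, hP.1, hQ.1, Matrix.conjTranspose_zero] at this
  have hsum : (P + Q).PosSemidef := hP.add hQ
  have hs1 : hP.sqrt * hQ.sqrt = 0 := sqrt_mul_sqrt_eq_zero hP hQ hPQ
  have hs2 : hQ.sqrt * hP.sqrt = 0 := sqrt_mul_sqrt_eq_zero hQ hP hQP
  have hsq : (hP.sqrt + hQ.sqrt) ^ 2 = P + Q := by
    rw [pow_two, Matrix.add_mul, Matrix.mul_add, Matrix.mul_add, hs1, hs2,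
      hP.sqrt_mul_self, hQ.sqrt_mul_self]
    simp
  have hadd : (hP.sqrt + hQ.sqrt).PosSemidef := hP.posSemidef_sqrt.add hQ.posSemidef_sqrt
  have hsqrt_add : hP.sqrt + hQ.sqrt = hsum.sqrt := hadd.eq_sqrt_of_sq_eq hsum hsq
  have hC : (Matrix.fromCols A B) * (Matrix.fromCols A B)ᴴ = P + Q := by
    rw [Matrix.conjTranspose_fromCols_eq_fromRows_conjTranspose,
      Matrix.fromCols_mul_fromRows]
  rw [nuclearNorm_eq_trace_sqrt (Matrix.fromCols A B), nuclearNorm_eq_trace_sqrt A,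
    nuclearNorm_eq_trace_sqrt B,
    sqrt_congr hC (Matrix.posSemidef_self_mul_conjTranspose _) hsum,
    ← hsqrt_add, Matrix.trace_add]
end

section
/- For matrices A ∈ ℝ^{d×n} and B ∈ ℝ^{d×m} with d ≤ min{n,m}, if the spectral norms satisfy ‖A‖_σ ≤ α and ‖B‖_σ ≤ α, then ‖A‖_* + ‖B‖_* − ‖[A,B]‖_* ≤ (2−√2) α d. -/
open Matrix BigOperators

namespace TUB

variable {d : ℕ}

/-- Functional calculus for a Hermitian real matrix. -/
noncomputable def mcfc {M : Matrix (Fin d) (Fin d) ℝ} (hM : M.IsHermitian) (f : ℝ → ℝ) :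
    Matrix (Fin d) (Fin d) ℝ :=
  (hM.eigenvectorUnitary : Matrix (Fin d) (Fin d) ℝ) * Matrix.diagonal (f ∘ hM.eigenvalues)
    * star (hM.eigenvectorUnitary : Matrix (Fin d) (Fin d) ℝ)

variable {M : Matrix (Fin d) (Fin d) ℝ} (hM : M.IsHermitian) (f g : ℝ → ℝ)

lemma star_mul_self : star (hM.eigenvectorUnitary : Matrix (Fin d) (Fin d) ℝ) *
    (hM.eigenvectorUnitary : Matrix (Fin d) (Fin d) ℝ) = 1 := by
  exact Unitary.coe_star_mul_self _

lemma mul_star_self : (hM.eigenvectorUnitary : Matrix (Fin d) (Fin d) ℝ) *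
    star (hM.eigenvectorUnitary : Matrix (Fin d) (Fin d) ℝ) = 1 := by
  exact Unitary.coe_mul_star_self _

lemma mcfc_mul : mcfc hM f * mcfc hM g = mcfc hM (f * g) := by
  simp only [mcfc, Matrix.mul_assoc]
  rw [← Matrix.mul_assoc (star _) _ _, star_mul_self hM, one_mul,
    ← Matrix.mul_assoc (Matrix.diagonal _) _ _, Matrix.diagonal_mul_diagonal]
  rfl

lemma mcfc_id : mcfc hM id = M := by
  have := hM.spectral_theorem
  simp only [RCLike.ofReal_real_eq_id] at this
  rw [mcfc]
  exact this.symm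

lemma mcfc_one : mcfc hM (fun _ => 1) = 1 := by
  rw [mcfc]
  have : Matrix.diagonal ((fun _ : ℝ => (1:ℝ)) ∘ hM.eigenvalues) = 1 := by
    ext i j
    by_cases h : i = j <;> simp [h, Matrix.diagonal, Matrix.one_apply]
  rw [this, Matrix.mul_one, mul_star_self]

lemma mcfc_hermitian : (mcfc hM f).IsHermitian := by
  rw [Matrix.IsHermitian, mcfc]
  simp only [Matrix.conjTranspose_mul, Matrix.mul_assoc]
  rw [Matrix.diagonal_conjTranspose]
  simp [Matrix.star_eq_conjTranspose, Matrix.mul_assoc]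

lemma mcfc_trace : (mcfc hM f).trace = ∑ i, f (hM.eigenvalues i) := by
  rw [mcfc, Matrix.trace_mul_cycle, star_mul_self hM, one_mul, Matrix.trace_diagonal]
  rfl

lemma mcfc_congr (h : ∀ i, f (hM.eigenvalues i) = g (hM.eigenvalues i)) :
    mcfc hM f = mcfc hM g := by
  unfold mcfc
  have : (f ∘ hM.eigenvalues) = (g ∘ hM.eigenvalues) := funext h
  rw [this]

lemma trace_conjTranspose_mul_self_nonneg (N : Matrix (Fin d) (Fin d) ℝ) :
    0 ≤ (Nᴴ * N).trace := by
  rw [Matrix.trace]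
  refine Finset.sum_nonneg fun j _ => ?_
  simp only [Matrix.diag_apply, Matrix.mul_apply, Matrix.conjTranspose_apply, star_trivial]
  exact Finset.sum_nonneg fun i _ => mul_self_nonneg _

/-- trace AM-GM: if `P, V, W` are symmetric with `W * V = 1` then
`2 tr P ≤ tr (V * (P*P) * V) + tr (W*W)`. -/
lemma trace_amgm {P V W : Matrix (Fin d) (Fin d) ℝ}
    (hP : P.IsHermitian) (hV : V.IsHermitian) (hW : W.IsHermitian)
    (hWV : W * V = 1) :
    2 * P.trace ≤ (V * (P * P) * V).trace + (W * W).trace := by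
  have hVW : V * W = 1 := mul_eq_one_comm.mp hWV
  have h0 := trace_conjTranspose_mul_self_nonneg (P * V - W)
  have hexp : (P * V - W)ᴴ * (P * V - W)
      = V * (P * P) * V - V * P * W - W * P * V + W * W := by
    rw [Matrix.conjTranspose_sub, Matrix.conjTranspose_mul, hP.eq, hV.eq, hW.eq]
    rw [Matrix.sub_mul, Matrix.mul_sub, Matrix.mul_sub]
    noncomm_ring
  rw [hexp] at h0
  have h1 : (V * P * W).trace = P.trace := by
    rw [Matrix.trace_mul_cycle, hWV, one_mul]
  have h2 : (W * P * V).trace = P.trace := by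
    rw [Matrix.trace_mul_cycle, hVW, one_mul]
  rw [Matrix.trace_add, Matrix.trace_sub, Matrix.trace_sub] at h0
  have h4 : (V * P * P * V).trace = (V * (P * P) * V).trace := by
    rw [Matrix.mul_assoc V P P]
  linarith [h0, h1, h2, h4]

lemma scalar_bound {μ ε : ℝ} (hμ : 0 ≤ μ) (hε : 0 < ε) :
    (Real.sqrt (max (Real.sqrt (μ/2)) ε))⁻¹ * (Real.sqrt (max (Real.sqrt (μ/2)) ε))⁻¹ * μ
      + 2 * (Real.sqrt (max (Real.sqrt (μ/2)) ε) * Real.sqrt (max (Real.sqrt (μ/2)) ε))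
      ≤ 2 * Real.sqrt 2 * Real.sqrt μ + 2 * ε := by
  have hmaxpos : 0 < max (Real.sqrt (μ/2)) ε := lt_of_lt_of_le hε (le_max_right _ _)
  have hself : Real.sqrt (max (Real.sqrt (μ/2)) ε) * Real.sqrt (max (Real.sqrt (μ/2)) ε)
      = max (Real.sqrt (μ/2)) ε := Real.mul_self_sqrt hmaxpos.le
  have hinv : (Real.sqrt (max (Real.sqrt (μ/2)) ε))⁻¹ * (Real.sqrt (max (Real.sqrt (μ/2)) ε))⁻¹
      = (max (Real.sqrt (μ/2)) ε)⁻¹ := by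
    rw [← mul_inv, hself]
  rw [hself, hinv]
  have hs : 0 ≤ Real.sqrt μ := Real.sqrt_nonneg _
  have hs2 : Real.sqrt μ * Real.sqrt μ = μ := Real.mul_self_sqrt hμ
  have hr2 : (0:ℝ) < Real.sqrt 2 := Real.sqrt_pos.mpr (by norm_num)
  have hr22 : Real.sqrt 2 * Real.sqrt 2 = 2 := Real.mul_self_sqrt (by norm_num)
  have h2 : Real.sqrt (μ/2) = Real.sqrt μ / Real.sqrt 2 := by
    rw [Real.sqrt_div hμ]
  rcases max_cases (Real.sqrt (μ/2)) ε with ⟨hm, hc⟩ | ⟨hm, hc⟩ <;> rw [hm, inv_mul_eq_div]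
  · -- ε ≤ √(μ/2), so √μ ≥ √2 ε > 0
    rw [h2] at hc ⊢
    have hspos : 0 < Real.sqrt μ := by
      have h3 : 0 < Real.sqrt μ / Real.sqrt 2 := lt_of_lt_of_le hε hc
      rcases div_pos_iff.mp h3 with ⟨h, _⟩ | ⟨_, h⟩
      · exact h
      · linarith
    have e1 : μ / (Real.sqrt μ / Real.sqrt 2) = Real.sqrt 2 * Real.sqrt μ := by
      rw [div_div_eq_mul_div, div_eq_iff hspos.ne']
      nlinarith
    have e2 : 2 * (Real.sqrt μ / Real.sqrt 2) = Real.sqrt 2 * Real.sqrt μ := by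
      field_simp
      nlinarith
    rw [e1, e2]
    nlinarith
  · -- √(μ/2) < ε
    rw [h2] at hc
    have hc' := hc.le
    rw [div_le_iff₀ hr2] at hc'
    have hsle : Real.sqrt μ ≤ Real.sqrt 2 * ε := by nlinarith
    have e3 : μ / ε ≤ 2 * Real.sqrt 2 * Real.sqrt μ := by
      rw [div_le_iff₀ hε]
      nlinarith [mul_nonneg hs hε.le, mul_nonneg hr2.le hε.le]
    linarith

lemma key {S T : Matrix (Fin d) (Fin d) ℝ} (hS : S.PosSemidef) (hT : T.PosSemidef) :
    ∑ i, Real.sqrt (hS.1.eigenvalues i) + ∑ i, Real.sqrt (hT.1.eigenvalues i)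
      ≤ Real.sqrt 2 * ∑ i, Real.sqrt ((hS.1.add hT.1).eigenvalues i) := by
  have hR : (S + T).IsHermitian := hS.1.add hT.1
  have hRpsd : (S + T).PosSemidef := hS.add hT
  -- square roots of S and T
  have hPS : mcfc hS.1 Real.sqrt * mcfc hS.1 Real.sqrt = S := by
    rw [mcfc_mul, mcfc_congr hS.1 _ id
      (fun i => Real.mul_self_sqrt (hS.eigenvalues_nonneg i)), mcfc_id]
  have hPT : mcfc hT.1 Real.sqrt * mcfc hT.1 Real.sqrt = T := by
    rw [mcfc_mul, mcfc_congr hT.1 _ id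
      (fun i => Real.mul_self_sqrt (hT.eigenvalues_nonneg i)), mcfc_id]
  refine le_of_forall_pos_le_add fun ε hε => ?_
  have hd1 : (0:ℝ) < (d:ℝ) + 1 := by positivity
  set ε' : ℝ := ε / ((d:ℝ) + 1) with hε'def
  have hε' : 0 < ε' := div_pos hε hd1
  set g : ℝ → ℝ := fun x => Real.sqrt (max (Real.sqrt (x/2)) ε') with hgdef
  set W : Matrix (Fin d) (Fin d) ℝ := mcfc hR g with hWdef
  set V : Matrix (Fin d) (Fin d) ℝ := mcfc hR (fun x => (g x)⁻¹) with hVdef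
  have hgpos : ∀ x : ℝ, 0 < g x := fun x =>
    Real.sqrt_pos.mpr (lt_of_lt_of_le hε' (le_max_right _ _))
  have hWV : W * V = 1 := by
    rw [hWdef, hVdef, mcfc_mul, mcfc_congr hR _ (fun _ => 1)
      (fun i => mul_inv_cancel₀ (hgpos _).ne'), mcfc_one]
  -- trace AM-GM applied to S and T
  have h1 := trace_amgm (mcfc_hermitian hS.1 Real.sqrt) (mcfc_hermitian hR _)
    (mcfc_hermitian hR g) hWV
  have h2 := trace_amgm (mcfc_hermitian hT.1 Real.sqrt) (mcfc_hermitian hR _)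
    (mcfc_hermitian hR g) hWV
  rw [hPS] at h1
  rw [hPT] at h2
  rw [mcfc_trace] at h1 h2
  -- combine the two middle traces
  have hVSV : (V * S * V).trace + (V * T * V).trace = (V * (S + T) * V).trace := by
    rw [← Matrix.trace_add]
    congr 1
    rw [Matrix.mul_add, Matrix.add_mul]
  -- compute the traces via the functional calculus
  have hmid : (V * (S + T) * V).trace
      = ∑ i, (g (hR.eigenvalues i))⁻¹ * (g (hR.eigenvalues i))⁻¹ * hR.eigenvalues i := by
    have h' : (V * mcfc hR id * V).trace
        = ∑ i, (g (hR.eigenvalues i))⁻¹ * (g (hR.eigenvalues i))⁻¹ * hR.eigenvalues i := by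
      rw [hVdef, mcfc_mul, mcfc_mul, mcfc_trace]
      refine Finset.sum_congr rfl fun i _ => ?_
      simp only [Pi.mul_apply, id_eq]
      ring
    rwa [mcfc_id] at h'
  have hW2 : (W * W).trace = ∑ i, g (hR.eigenvalues i) * g (hR.eigenvalues i) := by
    rw [hWdef, mcfc_mul, mcfc_trace]
    rfl
  have hsum : 2 * (∑ i, Real.sqrt (hS.1.eigenvalues i)) + 2 * (∑ i, Real.sqrt (hT.1.eigenvalues i))
      ≤ ∑ i, ((g (hR.eigenvalues i))⁻¹ * (g (hR.eigenvalues i))⁻¹ * hR.eigenvalues i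
          + 2 * (g (hR.eigenvalues i) * g (hR.eigenvalues i))) := by
    rw [Finset.sum_add_distrib, ← Finset.mul_sum, ← hmid, ← hW2]
    linarith [h1, h2, hVSV]
  have hbound : ∑ i, ((g (hR.eigenvalues i))⁻¹ * (g (hR.eigenvalues i))⁻¹ * hR.eigenvalues i
          + 2 * (g (hR.eigenvalues i) * g (hR.eigenvalues i)))
      ≤ ∑ i, (2 * Real.sqrt 2 * Real.sqrt (hR.eigenvalues i) + 2 * ε') := by
    refine Finset.sum_le_sum fun i _ => ?_
    exact scalar_bound (hRpsd.eigenvalues_nonneg i) hε'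
  have hconst : ∑ i : Fin d, (2 * Real.sqrt 2 * Real.sqrt (hR.eigenvalues i) + 2 * ε')
      = 2 * Real.sqrt 2 * (∑ i, Real.sqrt (hR.eigenvalues i)) + (d:ℝ) * (2 * ε') := by
    rw [Finset.sum_add_distrib, ← Finset.mul_sum, Finset.sum_const, Finset.card_univ,
      Fintype.card_fin, nsmul_eq_mul]
  have hdε : (d:ℝ) * ε' ≤ ε := by
    have : ((d:ℝ) + 1) * ε' = ε := by
      rw [hε'def]
      field_simp
    nlinarith [hε'.le]
  have heig : (∑ i, Real.sqrt ((hS.1.add hT.1).eigenvalues i))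
      = ∑ i, Real.sqrt (hR.eigenvalues i) := rfl
  rw [heig]
  linarith [hsum, hbound.trans_eq hconst, hdε]

lemma sqrt_eig_sum_congr {M N : Matrix (Fin d) (Fin d) ℝ} (h : M = N)
    (hM : M.IsHermitian) (hN : N.IsHermitian) :
    ∑ i, Real.sqrt (hM.eigenvalues i) = ∑ i, Real.sqrt (hN.eigenvalues i) := by
  subst h; rfl

end TUB

theorem transferability_upper_bound {d n m : ℕ} {α : ℝ}
    (A : Matrix (Fin d) (Fin n) ℝ) (B : Matrix (Fin d) (Fin m) ℝ)
    (hdn : d ≤ n) (hdm : d ≤ m) (hα : 0 < α)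
    (hA : ∀ i, singularValues A i ≤ α) (hB : ∀ i, singularValues B i ≤ α) :
    nuclearNorm A + nuclearNorm B - nuclearNorm (Matrix.fromCols A B) ≤
      (2 - Real.sqrt 2) * α * d := by
  have hSpsd : (A * Aᴴ).PosSemidef := Matrix.posSemidef_self_mul_conjTranspose A
  have hTpsd : (B * Bᴴ).PosSemidef := Matrix.posSemidef_self_mul_conjTranspose B
  have hCC : Matrix.fromCols A B * (Matrix.fromCols A B)ᴴ = A * Aᴴ + B * Bᴴ := by
    rw [Matrix.conjTranspose_fromCols_eq_fromRows_conjTranspose,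
      Matrix.fromCols_mul_fromRows]
  have hkey := TUB.key hSpsd hTpsd
  have ha : nuclearNorm A = ∑ i, Real.sqrt (hSpsd.1.eigenvalues i) := rfl
  have hb : nuclearNorm B = ∑ i, Real.sqrt (hTpsd.1.eigenvalues i) := rfl
  have hc : nuclearNorm (Matrix.fromCols A B)
      = ∑ i, Real.sqrt ((hSpsd.1.add hTpsd.1).eigenvalues i) :=
    TUB.sqrt_eig_sum_congr hCC _ _
  have ha' : nuclearNorm A ≤ α * d := by
    calc nuclearNorm A ≤ ∑ _i : Fin d, α := Finset.sum_le_sum fun i _ => hA i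
    _ = α * d := by rw [Finset.sum_const, Finset.card_univ, Fintype.card_fin, nsmul_eq_mul]; ring
  have hb' : nuclearNorm B ≤ α * d := by
    calc nuclearNorm B ≤ ∑ _i : Fin d, α := Finset.sum_le_sum fun i _ => hB i
    _ = α * d := by rw [Finset.sum_const, Finset.card_univ, Fintype.card_fin, nsmul_eq_mul]; ring
  rw [← ha, ← hb, ← hc] at hkey
  have hr22 : Real.sqrt 2 * Real.sqrt 2 = 2 := Real.mul_self_sqrt (by norm_num)
  have hr21 : (1:ℝ) ≤ Real.sqrt 2 := by nlinarith [Real.sqrt_nonneg 2]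
  nlinarith [hkey, ha', hb', mul_nonneg hα.le (Nat.cast_nonneg d : (0:ℝ) ≤ d)]
end

section
/- For A ∈ ℝ^{d×n}, B ∈ ℝ^{d×m} with d ≤ min{n,m} and ‖A‖_σ ≤ α, ‖B‖_σ ≤ α, equality ‖A‖_* + ‖B‖_* − ‖[A,B]‖_* = (2−√2) α d holds if and only if ‖A‖_* = ‖B‖_* = α d. -/
open Matrix BigOperators

lemma real_conjT {p q : Type*} (M : Matrix p q ℝ) : Mᴴ = Mᵀ := by
  ext i j; simp [Matrix.conjTranspose_apply]

lemma psd_diag_nonneg {d : ℕ} {M : Matrix (Fin d) (Fin d) ℝ} (hM : M.PosSemidef) (i : Fin d) :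
    0 ≤ M i i := by
  have := hM.dotProduct_mulVec_nonneg (Pi.single i 1)
  simpa [dotProduct, Matrix.mulVec, Pi.single_apply] using this

lemma trace_le_nuclearNorm {d : ℕ} {k : Type*} [Fintype k] (C M : Matrix (Fin d) k ℝ)
    (hM : ((1 : Matrix (Fin d) (Fin d) ℝ) - M * Mᴴ).PosSemidef) :
    Matrix.trace (C * Mᴴ) ≤ nuclearNorm C := by
  classical
  set hH := Matrix.isHermitian_mul_conjTranspose_self C with hHdef
  set U : Matrix (Fin d) (Fin d) ℝ := (hH.eigenvectorUnitary : Matrix (Fin d) (Fin d) ℝ) with hUdef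
  have hU1 : star U * U = 1 := Matrix.mem_unitaryGroup_iff'.mp hH.eigenvectorUnitary.2
  have hU2 : U * star U = 1 := Matrix.mem_unitaryGroup_iff.mp hH.eigenvectorUnitary.2
  have hspec : star U * (C * Cᴴ) * U = Matrix.diagonal hH.eigenvalues := by
    have := hH.conjStarAlgAut_star_eigenvectorUnitary
    rw [Unitary.conjStarAlgAut_apply, Unitary.coe_star, star_star] at this
    rw [this]
    rfl
  set C' : Matrix (Fin d) k ℝ := star U * C with hC'def
  set M' : Matrix (Fin d) k ℝ := star U * M with hM'def
  have hCC' : C' * C'ᴴ = Matrix.diagonal hH.eigenvalues := by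
    rw [hC'def, Matrix.conjTranspose_mul, ← hspec]
    simp [Matrix.star_eq_conjTranspose, Matrix.mul_assoc]
  have hU1' : Uᴴ * U = 1 := by rw [← Matrix.star_eq_conjTranspose]; exact hU1
  have hU2' : U * Uᴴ = 1 := by rw [← Matrix.star_eq_conjTranspose]; exact hU2
  have hM'T : M'ᴴ = Mᴴ * U := by
    rw [hM'def, Matrix.conjTranspose_mul, Matrix.star_eq_conjTranspose,
      Matrix.conjTranspose_conjTranspose]
  have hMM' : ((1 : Matrix (Fin d) (Fin d) ℝ) - M' * M'ᴴ).PosSemidef := by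
    have h2 := hM.conjTranspose_mul_mul_same U
    have key : Uᴴ * (1 - M * Mᴴ) * U = 1 - M' * M'ᴴ := by
      simp only [Matrix.mul_sub, Matrix.sub_mul, Matrix.mul_one, Matrix.mul_assoc, hU1']
      congr 1
      rw [hM'def, hM'T, Matrix.star_eq_conjTranspose]
      simp [Matrix.mul_assoc]
    rwa [key] at h2
  have htr : Matrix.trace (C * Mᴴ) = Matrix.trace (C' * M'ᴴ) := by
    rw [hC'def, hM'T, Matrix.star_eq_conjTranspose]
    calc Matrix.trace (C * Mᴴ)
        = Matrix.trace (Mᴴ * C) := Matrix.trace_mul_comm _ _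
      _ = Matrix.trace (Mᴴ * (U * Uᴴ * C)) := by rw [hU2', Matrix.one_mul]
      _ = Matrix.trace ((Mᴴ * U) * (Uᴴ * C)) := by simp [Matrix.mul_assoc]
      _ = Matrix.trace ((Uᴴ * C) * (Mᴴ * U)) := Matrix.trace_mul_comm _ _
  rw [htr]
  have expand : Matrix.trace (C' * M'ᴴ) = ∑ i, ∑ j, C' i j * M' i j := by
    simp [Matrix.trace, Matrix.diag, Matrix.mul_apply, Matrix.conjTranspose_apply]
  rw [expand]
  have hrowC : ∀ i, ∑ j, (C' i j)^2 = hH.eigenvalues i := by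
    intro i
    have := congrFun (congrFun hCC' i) i
    simpa [Matrix.mul_apply, Matrix.conjTranspose_apply, pow_two] using this
  have hrowM : ∀ i, ∑ j, (M' i j)^2 ≤ 1 := by
    intro i
    have := psd_diag_nonneg hMM' i
    have h2 : (M' * M'ᴴ) i i = ∑ j, (M' i j)^2 := by
      simp [Matrix.mul_apply, Matrix.conjTranspose_apply, pow_two]
    simp only [Matrix.sub_apply, Matrix.one_apply_eq] at this
    linarith [this, h2 ▸ this]
  refine Finset.sum_le_sum fun i _ => ?_
  have cs : (∑ j, C' i j * M' i j) ≤ Real.sqrt (∑ j, (C' i j)^2) * Real.sqrt (∑ j, (M' i j)^2) := by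
    have h1 := Finset.sum_mul_sq_le_sq_mul_sq Finset.univ (fun j => C' i j) (fun j => M' i j)
    have h2 : (∑ j, C' i j * M' i j) ≤ |∑ j, C' i j * M' i j| := le_abs_self _
    calc (∑ j, C' i j * M' i j) ≤ |∑ j, C' i j * M' i j| := h2
      _ = Real.sqrt ((∑ j, C' i j * M' i j)^2) := (Real.sqrt_sq_eq_abs _).symm
      _ ≤ Real.sqrt ((∑ j, (C' i j)^2) * (∑ j, (M' i j)^2)) := Real.sqrt_le_sqrt h1
      _ = _ := Real.sqrt_mul (Finset.sum_nonneg fun j _ => sq_nonneg _) _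
  calc (∑ j, C' i j * M' i j) ≤ Real.sqrt (∑ j, (C' i j)^2) * Real.sqrt (∑ j, (M' i j)^2) := cs
    _ ≤ Real.sqrt (∑ j, (C' i j)^2) * 1 := by
        apply mul_le_mul_of_nonneg_left _ (Real.sqrt_nonneg _)
        exact Real.sqrt_le_one.mpr (hrowM i)
    _ = singularValues C i := by rw [mul_one, hrowC i]; rfl


lemma exists_dual_attain {d n : ℕ} (hdn : d ≤ n) (A : Matrix (Fin d) (Fin n) ℝ) :
    ∃ U : Matrix (Fin d) (Fin n) ℝ, U * Uᴴ = 1 ∧ Matrix.trace (A * Uᴴ) = nuclearNorm A := by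
  classical
  set hH := Matrix.isHermitian_mul_conjTranspose_self A with hHdef
  set W : Matrix (Fin d) (Fin d) ℝ := (hH.eigenvectorUnitary : Matrix (Fin d) (Fin d) ℝ)
    with hWdef
  have hW1 : star W * W = 1 := Matrix.mem_unitaryGroup_iff'.mp hH.eigenvectorUnitary.2
  have hW2 : W * star W = 1 := Matrix.mem_unitaryGroup_iff.mp hH.eigenvectorUnitary.2
  have hW1' : Wᴴ * W = 1 := by rw [← Matrix.star_eq_conjTranspose]; exact hW1
  have hW2' : W * Wᴴ = 1 := by rw [← Matrix.star_eq_conjTranspose]; exact hW2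
  have hspec : star W * (A * Aᴴ) * W = Matrix.diagonal hH.eigenvalues := by
    have := hH.conjStarAlgAut_star_eigenvectorUnitary
    rw [Unitary.conjStarAlgAut_apply, Unitary.coe_star, star_star] at this
    rw [this]
    rfl
  set R : Matrix (Fin d) (Fin n) ℝ := Wᴴ * A with hRdef
  have hRR : R * Rᴴ = Matrix.diagonal hH.eigenvalues := by
    rw [hRdef, Matrix.conjTranspose_mul, Matrix.conjTranspose_conjTranspose, ← hspec,
      Matrix.star_eq_conjTranspose]
    simp [Matrix.mul_assoc]
  have hRR' : ∀ i i' : Fin d, ∑ t, R i t * R i' t = if i = i' then hH.eigenvalues i else 0 := by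
    intro i i'
    have := congrFun (congrFun hRR i) i'
    simpa [Matrix.mul_apply, Matrix.conjTranspose_apply, Matrix.diagonal_apply, eq_comm]
      using this
  have hev_nonneg : ∀ i, 0 ≤ hH.eigenvalues i :=
    fun i => (Matrix.posSemidef_self_mul_conjTranspose A).eigenvalues_nonneg i
  -- extended eigenvalue function on Fin n
  set lam : Fin n → ℝ := fun j => if h : (j : ℕ) < d then hH.eigenvalues ⟨j, h⟩ else 0
    with hlamdef
  set r : Fin n → EuclideanSpace ℝ (Fin n) :=
    fun j => if h : (j : ℕ) < d then WithLp.toLp 2 (fun t => R ⟨j, h⟩ t) else 0 with hrdef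
  set v : Fin n → EuclideanSpace ℝ (Fin n) :=
    fun j => (Real.sqrt (lam j))⁻¹ • r j with hvdef
  set s : Set (Fin n) := {j | lam j ≠ 0} with hsdef
  have hinner_r : ∀ j j' : Fin n, (j : ℕ) < d → (j' : ℕ) < d →
      (inner ℝ (r j) (r j') : ℝ) = if j = j' then lam j else 0 := by
    intro j j' hj hj'
    rw [hrdef]
    simp only [hj, hj', dif_pos]
    rw [PiLp.inner_apply]
    simp only [RCLike.inner_apply, starRingEnd_apply, star_trivial]
    rw [show (∑ t, R ⟨j', hj'⟩ t * R ⟨j, hj⟩ t) = ∑ t, R ⟨j, hj⟩ t * R ⟨j', hj'⟩ t from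
      Finset.sum_congr rfl fun t _ => mul_comm _ _]
    rw [show ∑ t, R ⟨j, hj⟩ t * R ⟨j', hj'⟩ t
        = if (⟨j, hj⟩ : Fin d) = ⟨j', hj'⟩ then hH.eigenvalues ⟨j, hj⟩ else 0 from hRR' _ _]
    have : ((⟨j, hj⟩ : Fin d) = ⟨j', hj'⟩) ↔ j = j' := by
      simp [Fin.ext_iff]
    rw [hlamdef]; simp only [hj, dif_pos]
    by_cases h : j = j'
    · simp [h, this.mpr h]
    · rw [if_neg h, if_neg (fun hh => h (this.mp hh))]
  have hlam_nonneg : ∀ j, 0 ≤ lam j := by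
    intro j; rw [hlamdef]; dsimp only
    split
    · exact hev_nonneg _
    · exact le_refl 0
  have horth : Orthonormal ℝ (s.restrict v) := by
    rw [orthonormal_iff_ite]
    rintro ⟨j, hj⟩ ⟨j', hj'⟩
    have hjd : (j : ℕ) < d := by
      by_contra h
      exact hj (by rw [hlamdef]; simp only; rw [dif_neg h])
    have hj'd : (j' : ℕ) < d := by
      by_contra h
      exact hj' (by rw [hlamdef]; simp only; rw [dif_neg h])
    have hlj : lam j ≠ 0 := hj
    have hlj' : lam j' ≠ 0 := hj'
    simp only [Set.restrict_apply, hvdef, Set.restrict]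
    rw [inner_smul_left, inner_smul_right, hinner_r j j' hjd hj'd]
    simp only [starRingEnd_apply, star_trivial]
    by_cases h : j = j'
    · subst h
      have h0 : 0 < lam j := lt_of_le_of_ne (hlam_nonneg j) (Ne.symm hlj)
      rw [if_pos rfl, if_pos rfl, ← mul_assoc, ← mul_inv,
        Real.mul_self_sqrt h0.le, inv_mul_cancel₀ hlj]
    · rw [if_neg h, if_neg (by simpa [Subtype.ext_iff] using h)]
      ring
  obtain ⟨b, hb⟩ := horth.exists_orthonormalBasis_extension_of_card_eq
    (by simp : Module.finrank ℝ (EuclideanSpace ℝ (Fin n)) = Fintype.card (Fin n))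
  set V : Matrix (Fin d) (Fin n) ℝ := fun i t => b (Fin.castLE hdn i) t with hVdef
  have hVV : V * Vᴴ = 1 := by
    ext i i'
    have := (orthonormal_iff_ite.mp b.orthonormal) (Fin.castLE hdn i) (Fin.castLE hdn i')
    rw [PiLp.inner_apply] at this
    simp only [RCLike.inner_apply, starRingEnd_apply, star_trivial] at this
    simp only [Matrix.mul_apply, Matrix.conjTranspose_apply, star_trivial]
    simp only [hVdef]
    rw [show ∑ t, b (Fin.castLE hdn i) t * b (Fin.castLE hdn i') t =
      ∑ t, b (Fin.castLE hdn i) t * b (Fin.castLE hdn i') t from rfl]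
    rw [show (∑ t, b (Fin.castLE hdn i') t * b (Fin.castLE hdn i) t) =
      ∑ t, b (Fin.castLE hdn i) t * b (Fin.castLE hdn i') t from
      Finset.sum_congr rfl fun t _ => mul_comm _ _] at this
    rw [this]
    have hcast : (Fin.castLE hdn i = Fin.castLE hdn i') ↔ i = i' := by
      simp [Fin.ext_iff]
    by_cases h : i = i'
    · simp [h, Matrix.one_apply]
    · rw [if_neg (fun hh => h (hcast.mp hh)), Matrix.one_apply_ne h]
  refine ⟨W * V, ?_, ?_⟩
  · rw [Matrix.conjTranspose_mul]
    calc W * V * (Vᴴ * Wᴴ) = W * (V * Vᴴ) * Wᴴ := by simp [Matrix.mul_assoc]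
      _ = 1 := by rw [hVV, Matrix.mul_one, hW2']
  · rw [Matrix.conjTranspose_mul]
    have : Matrix.trace (A * (Vᴴ * Wᴴ)) = Matrix.trace (R * Vᴴ) := by
      rw [hRdef]
      calc Matrix.trace (A * (Vᴴ * Wᴴ)) = Matrix.trace (Wᴴ * (A * Vᴴ)) := by
            rw [← Matrix.mul_assoc, Matrix.trace_mul_comm]
        _ = Matrix.trace ((Wᴴ * A) * Vᴴ) := by rw [Matrix.mul_assoc]
    rw [this]
    have hdiag : ∀ i : Fin d, (R * Vᴴ) i i = Real.sqrt (hH.eigenvalues i) := by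
      intro i
      have hid : ((Fin.castLE hdn i : Fin n) : ℕ) < d := by
        exact i.isLt
      have hlamv : lam (Fin.castLE hdn i) = hH.eigenvalues i := by
        rw [hlamdef]; simp only [dif_pos hid]
        congr 1
      have hrv : r (Fin.castLE hdn i) = fun t => R i t := by
        rw [hrdef]; simp only [dif_pos hid]
        rfl
      by_cases hlz : hH.eigenvalues i = 0
      · -- R row i is zero
        have hrow : ∀ t, R i t = 0 := by
          intro t
          have hsum := hRR' i i
          rw [if_pos rfl, hlz] at hsum
          have : ∀ t ∈ Finset.univ, (0:ℝ) ≤ R i t * R i t := fun t _ => mul_self_nonneg _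
          have := (Finset.sum_eq_zero_iff_of_nonneg this).mp hsum t (Finset.mem_univ t)
          exact mul_self_eq_zero.mp this
        simp only [Matrix.mul_apply, Matrix.conjTranspose_apply, star_trivial]
        simp [hrow]
        exact (by rw [hlz, Real.sqrt_zero] : √(hH.eigenvalues i) = 0).symm
      · have hmem : Fin.castLE hdn i ∈ s := by
          rw [hsdef]; simp only [Set.mem_setOf_eq, hlamv]; exact hlz
        have hbv := hb _ hmem
        simp only [Matrix.mul_apply, Matrix.conjTranspose_apply, star_trivial]
        simp only [hVdef]
        have hVrow : ∀ t, b (Fin.castLE hdn i) t = (Real.sqrt (hH.eigenvalues i))⁻¹ * R i t := by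
          intro t
          rw [hbv, hvdef]
          simp only [hlamv]
          simp only [PiLp.smul_apply, hrv, smul_eq_mul]
        rw [Finset.sum_congr rfl (fun t _ => by rw [hVrow t])]
        have hsum := hRR' i i
        rw [if_pos rfl] at hsum
        rw [show ∑ t, R i t * ((Real.sqrt (hH.eigenvalues i))⁻¹ * R i t)
            = (Real.sqrt (hH.eigenvalues i))⁻¹ * ∑ t, R i t * R i t by
          rw [Finset.mul_sum]; exact Finset.sum_congr rfl fun t _ => by ring]
        rw [hsum]
        have h0 : 0 < hH.eigenvalues i := lt_of_le_of_ne (hev_nonneg i) (Ne.symm hlz)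
        have hs0 : Real.sqrt (hH.eigenvalues i) ≠ 0 := ne_of_gt (Real.sqrt_pos.mpr h0)
        field_simp
        rw [Real.sq_sqrt h0.le]
    rw [Matrix.trace]
    rw [Finset.sum_congr rfl (fun i _ => by rw [Matrix.diag_apply, hdiag i])]
    rfl


lemma eigenvalues_smul_one {d : ℕ} {k : Type*} [Fintype k] (C : Matrix (Fin d) k ℝ) {c : ℝ}
    (h : C * Cᴴ = c • (1 : Matrix (Fin d) (Fin d) ℝ)) (i : Fin d) :
    (Matrix.isHermitian_mul_conjTranspose_self C).eigenvalues i = c := by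
  classical
  set hH := Matrix.isHermitian_mul_conjTranspose_self C with hHdef
  set U : Matrix (Fin d) (Fin d) ℝ := (hH.eigenvectorUnitary : Matrix (Fin d) (Fin d) ℝ)
  have hU1 : star U * U = 1 := Matrix.mem_unitaryGroup_iff'.mp hH.eigenvectorUnitary.2
  have hspec : star U * (C * Cᴴ) * U = Matrix.diagonal hH.eigenvalues := by
    have := hH.conjStarAlgAut_star_eigenvectorUnitary
    rw [Unitary.conjStarAlgAut_apply, Unitary.coe_star, star_star] at this
    rw [this]
    rfl
  conv at hspec => lhs; rw [h]
  have hl : star U * (c • (1 : Matrix (Fin d) (Fin d) ℝ)) * U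
      = c • (1 : Matrix (Fin d) (Fin d) ℝ) := by
    rw [Matrix.mul_smul, Matrix.mul_one, Matrix.smul_mul, hU1]
  rw [hl] at hspec
  have := congrFun (congrFun hspec i) i
  simpa [Matrix.diagonal_apply, Matrix.smul_apply, Matrix.one_apply] using this.symm

lemma gram_eq_of_max {d : ℕ} {k : Type*} [Fintype k] {α : ℝ} (A : Matrix (Fin d) k ℝ)
    (hα : 0 < α) (hA : ∀ i, singularValues A i ≤ α) (hnn : nuclearNorm A = α * d) :
    A * Aᴴ = (α ^ 2) • (1 : Matrix (Fin d) (Fin d) ℝ) := by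
  classical
  set hH := Matrix.isHermitian_mul_conjTranspose_self A with hHdef
  have hev_nonneg : ∀ i, 0 ≤ hH.eigenvalues i :=
    fun i => (Matrix.posSemidef_self_mul_conjTranspose A).eigenvalues_nonneg i
  have hsv : ∀ i, singularValues A i = α := by
    by_contra hcon
    push_neg at hcon
    obtain ⟨i0, hi0⟩ := hcon
    have hlt : singularValues A i0 < α := lt_of_le_of_ne (hA i0) hi0
    have : nuclearNorm A < α * d := by
      rw [nuclearNorm]
      calc ∑ i, singularValues A i < ∑ _i : Fin d, α :=
            Finset.sum_lt_sum (fun i _ => hA i) ⟨i0, Finset.mem_univ _, hlt⟩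
        _ = α * d := by simp [mul_comm]
    exact absurd hnn (ne_of_lt this)
  have hev : ∀ i, hH.eigenvalues i = α ^ 2 := by
    intro i
    have h1 : Real.sqrt (hH.eigenvalues i) = α := hsv i
    have := congrArg (fun x => x ^ 2) h1
    rw [← Real.sq_sqrt (hev_nonneg i)]; exact this
  set U : Matrix (Fin d) (Fin d) ℝ := (hH.eigenvectorUnitary : Matrix (Fin d) (Fin d) ℝ)
  have hU2 : U * star U = 1 := Matrix.mem_unitaryGroup_iff.mp hH.eigenvectorUnitary.2
  have hspec := hH.spectral_theorem
  have hdiag : Matrix.diagonal (RCLike.ofReal ∘ hH.eigenvalues)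
      = (α ^ 2) • (1 : Matrix (Fin d) (Fin d) ℝ) := by
    ext i j
    by_cases h : i = j
    · subst h; simp [Matrix.diagonal_apply, hev i]; exact hev i
    · simp [Matrix.diagonal_apply, h, Matrix.one_apply_ne h]
  calc A * Aᴴ = U * Matrix.diagonal (RCLike.ofReal ∘ hH.eigenvalues) * star U := by
        rw [Unitary.conjStarAlgAut_apply] at hspec; exact hspec
    _ = U * ((α ^ 2) • (1 : Matrix (Fin d) (Fin d) ℝ)) * star U := by rw [hdiag]
    _ = (α ^ 2) • (U * star U) := by
        rw [Matrix.mul_smul, Matrix.mul_one, Matrix.smul_mul]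
    _ = (α ^ 2) • (1 : Matrix (Fin d) (Fin d) ℝ) := by rw [hU2]

lemma fromCols_mul_conjT {d : ℕ} {k l : Type*} [Fintype k] [Fintype l]
    (A : Matrix (Fin d) k ℝ) (B : Matrix (Fin d) l ℝ) :
    (Matrix.fromCols A B) * (Matrix.fromCols A B)ᴴ = A * Aᴴ + B * Bᴴ := by
  rw [real_conjT, real_conjT, real_conjT, Matrix.transpose_fromCols,
    Matrix.fromCols_mul_fromRows]


lemma psd_zero' {d : ℕ} : ((0 : Matrix (Fin d) (Fin d) ℝ)).PosSemidef := by
  constructor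
  · simp [Matrix.IsHermitian]
  · intro x; simp

lemma sum_le_sqrt_two_mul {d n m : ℕ} (hdn : d ≤ n) (hdm : d ≤ m)
    (A : Matrix (Fin d) (Fin n) ℝ) (B : Matrix (Fin d) (Fin m) ℝ)
    (hUA : ∃ U : Matrix (Fin d) (Fin n) ℝ, U * Uᴴ = 1 ∧ Matrix.trace (A * Uᴴ) = nuclearNorm A)
    (hUB : ∃ U : Matrix (Fin d) (Fin m) ℝ, U * Uᴴ = 1 ∧ Matrix.trace (B * Uᴴ) = nuclearNorm B)
    (htr : ∀ M : Matrix (Fin d) (Fin n ⊕ Fin m) ℝ,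
      ((1 : Matrix (Fin d) (Fin d) ℝ) - M * Mᴴ).PosSemidef →
      Matrix.trace (Matrix.fromCols A B * Mᴴ) ≤ nuclearNorm (Matrix.fromCols A B)) :
    nuclearNorm A + nuclearNorm B ≤ Real.sqrt 2 * nuclearNorm (Matrix.fromCols A B) := by
  obtain ⟨UA, hUA1, hUA2⟩ := hUA
  obtain ⟨UB, hUB1, hUB2⟩ := hUB
  have hs2 : Real.sqrt 2 * Real.sqrt 2 = 2 := Real.mul_self_sqrt (by norm_num)
  have hs2pos : (0:ℝ) < Real.sqrt 2 := Real.sqrt_pos.mpr (by norm_num)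
  set c : ℝ := (Real.sqrt 2)⁻¹ with hcdef
  have hcpos : 0 < c := inv_pos.mpr hs2pos
  set N : Matrix (Fin d) (Fin n ⊕ Fin m) ℝ := Matrix.fromCols UA UB with hNdef
  set M : Matrix (Fin d) (Fin n ⊕ Fin m) ℝ := c • N with hMdef
  have hNN : N * Nᴴ = (2:ℝ) • (1 : Matrix (Fin d) (Fin d) ℝ) := by
    rw [hNdef, fromCols_mul_conjT, hUA1, hUB1, two_smul]
  have hMH : Mᴴ = c • Nᴴ := by
    rw [hMdef, Matrix.conjTranspose_smul]
    simp
  have hMM : M * Mᴴ = 1 := by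
    rw [hMdef, hMH, Matrix.smul_mul, Matrix.mul_smul, hNN, smul_smul, smul_smul]
    rw [show c * c * 2 = 1 by
      rw [hcdef]; field_simp; exact (Real.sq_sqrt (by norm_num)).symm]
    rw [one_smul]
  have hpsd : ((1 : Matrix (Fin d) (Fin d) ℝ) - M * Mᴴ).PosSemidef := by
    rw [hMM, sub_self]; exact psd_zero'
  have hle := htr M hpsd
  have htrM : Matrix.trace (Matrix.fromCols A B * Mᴴ)
      = c * (nuclearNorm A + nuclearNorm B) := by
    rw [hMH, Matrix.mul_smul, Matrix.trace_smul]
    have hCN : Matrix.fromCols A B * Nᴴ = A * UAᴴ + B * UBᴴ := by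
      rw [hNdef, real_conjT, Matrix.transpose_fromCols, Matrix.fromCols_mul_fromRows,
        ← real_conjT UA, ← real_conjT UB]
    rw [hCN, Matrix.trace_add, hUA2, hUB2]
    simp
  rw [htrM] at hle
  have := mul_le_mul_of_nonneg_left hle (le_of_lt hs2pos)
  rw [← mul_assoc, hcdef, mul_inv_cancel₀ (ne_of_gt hs2pos), one_mul] at this
  exact this

theorem transferability_eq_iff {d n m : ℕ} {α : ℝ}
    (A : Matrix (Fin d) (Fin n) ℝ) (B : Matrix (Fin d) (Fin m) ℝ)
    (hdn : d ≤ n) (hdm : d ≤ m) (hα : 0 < α)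
    (hA : ∀ i, singularValues A i ≤ α) (hB : ∀ i, singularValues B i ≤ α) :
    nuclearNorm A + nuclearNorm B - nuclearNorm (Matrix.fromCols A B) =
        (2 - Real.sqrt 2) * α * d ↔
      nuclearNorm A = α * d ∧ nuclearNorm B = α * d := by
  have hs2 : Real.sqrt 2 * Real.sqrt 2 = 2 := Real.mul_self_sqrt (by norm_num)
  have hs2pos : (0:ℝ) < Real.sqrt 2 := Real.sqrt_pos.mpr (by norm_num)
  have hs2gt1 : (1:ℝ) < Real.sqrt 2 := by nlinarith [hs2, hs2pos]
  have haub : nuclearNorm A ≤ α * d := by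
    rw [nuclearNorm]
    calc ∑ i, singularValues A i ≤ ∑ _i : Fin d, α := Finset.sum_le_sum fun i _ => hA i
      _ = α * d := by simp [mul_comm]
  have hbub : nuclearNorm B ≤ α * d := by
    rw [nuclearNorm]
    calc ∑ i, singularValues B i ≤ ∑ _i : Fin d, α := Finset.sum_le_sum fun i _ => hB i
      _ = α * d := by simp [mul_comm]
  constructor
  · intro heq
    have hkey := sum_le_sqrt_two_mul hdn hdm A B (exists_dual_attain hdn A)
      (exists_dual_attain hdm B) (fun M hM => trace_le_nuclearNorm (Matrix.fromCols A B) M hM)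
    have hcc : nuclearNorm (Matrix.fromCols A B)
        = nuclearNorm A + nuclearNorm B - (2 - Real.sqrt 2) * α * d := by linarith [heq]
    rw [hcc] at hkey
    have hcube : (Real.sqrt 2 * Real.sqrt 2) * (α * (d:ℝ)) = 2 * (α * (d:ℝ)) := by rw [hs2]
    have hT : 2 * (α * d) ≤ nuclearNorm A + nuclearNorm B := by
      nlinarith [hkey, hcube, hs2gt1]
    exact ⟨le_antisymm haub (by linarith [hT, hbub]), le_antisymm hbub (by linarith [hT, haub])⟩
  · rintro ⟨ha, hb⟩
    have hAg := gram_eq_of_max A hα hA ha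
    have hBg := gram_eq_of_max B hα hB hb
    have hCg : (Matrix.fromCols A B) * (Matrix.fromCols A B)ᴴ
        = (2 * α ^ 2) • (1 : Matrix (Fin d) (Fin d) ℝ) := by
      rw [fromCols_mul_conjT, hAg, hBg, ← add_smul]
      norm_num [two_mul]
    have hCev : ∀ i, singularValues (Matrix.fromCols A B) i = Real.sqrt 2 * α := by
      intro i
      simp only [singularValues]
      rw [eigenvalues_smul_one _ hCg i]
      rw [Real.sqrt_mul (by norm_num : (0:ℝ) ≤ 2), Real.sqrt_sq hα.le]
    have hc : nuclearNorm (Matrix.fromCols A B) = Real.sqrt 2 * α * d := by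
      rw [nuclearNorm, Finset.sum_congr rfl fun i _ => hCev i]
      simp [mul_comm, mul_assoc]
    rw [ha, hb, hc]
    ring
end

section
/- Let Z₁,...,Z_k be matrices in ℝ^{d×nᵢ} each with spectral norm at most α, and let Z = [Z₁,...,Z_k] be their concatenation. Then the quantity λ·Σᵢ(‖Zᵢˢ‖_* + ‖Zᵢᵗ‖_* − ‖Zᵢ‖_*) is at most λ(2−√2)αkd for any λ ≥ 0, where each Zᵢ = [Zᵢˢ, Zᵢᵗ] with ‖Zᵢˢ‖_σ, ‖Zᵢᵗ‖_σ ≤ α. -/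
open Matrix BigOperators

lemma scalar1 {M c γ : ℝ} (hM0 : 0 ≤ M) (hMc : M ≤ c) (hγ : Real.sqrt c + Real.sqrt M ≤ γ)
    (hγ0 : 0 < γ) : Real.sqrt M - Real.sqrt c ≤ (M - c) / γ := by
  set a := Real.sqrt c with hadef
  set b := Real.sqrt M with hbdef
  have hc0 : 0 ≤ c := hM0.trans hMc
  have ha : a ^ 2 = c := Real.sq_sqrt hc0
  have hb : b ^ 2 = M := Real.sq_sqrt hM0
  have hab : b ≤ a := Real.sqrt_le_sqrt hMc
  rw [le_div_iff₀ hγ0]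
  nlinarith [Real.sqrt_nonneg M, Real.sqrt_nonneg c]

lemma scalar2 {m α : ℝ} (hm0 : 0 ≤ m) (hm : m ≤ α ^ 2) (hα : 0 < α) :
    Real.sqrt m - m / ((1 + Real.sqrt 2) * α) ≤ (2 - Real.sqrt 2) * α := by
  set t := Real.sqrt m with htdef
  have ht2 : t ^ 2 = m := Real.sq_sqrt hm0
  have ht : t ≤ α := by
    rw [htdef]
    calc Real.sqrt m ≤ Real.sqrt (α ^ 2) := Real.sqrt_le_sqrt hm
    _ = α := Real.sqrt_sq hα.le
  have h2 : Real.sqrt 2 ^ 2 = 2 := Real.sq_sqrt (by norm_num)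
  have hs0 : 0 ≤ Real.sqrt 2 := Real.sqrt_nonneg 2
  have hs1 : (1 : ℝ) ≤ Real.sqrt 2 := by nlinarith
  have hγ0 : 0 < (1 + Real.sqrt 2) * α := by positivity
  have key : 0 ≤ (α - t) * (Real.sqrt 2 * α - t) :=
    mul_nonneg (by linarith) (by nlinarith)
  have hgoal : (t - (2 - Real.sqrt 2) * α) * ((1 + Real.sqrt 2) * α) ≤ m := by nlinarith
  have := (le_div_iff₀ hγ0).mpr hgoal
  have ht0 : 0 ≤ t := Real.sqrt_nonneg m
  linarith

lemma per_j_asym {a b c α : ℝ} (hα : 0 < α) (hb0 : 0 ≤ b) (hba : b ≤ a) (ha : a ≤ α ^ 2)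
    (hc2 : c ≤ 2 * α ^ 2) (hca : a ≤ c) :
    Real.sqrt a + Real.sqrt b - Real.sqrt c ≤
      (2 - Real.sqrt 2) * α + (a + b - c) / ((1 + Real.sqrt 2) * α) := by
  have hs0 : 0 ≤ Real.sqrt 2 := Real.sqrt_nonneg 2
  have hγ0 : 0 < (1 + Real.sqrt 2) * α := by positivity
  have hsc : Real.sqrt c ≤ Real.sqrt 2 * α := by
    calc Real.sqrt c ≤ Real.sqrt (2 * α ^ 2) := Real.sqrt_le_sqrt hc2
    _ = Real.sqrt 2 * Real.sqrt (α ^ 2) := Real.sqrt_mul (by norm_num) _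
    _ = Real.sqrt 2 * α := by rw [Real.sqrt_sq hα.le]
  have hsa : Real.sqrt a ≤ α := by
    calc Real.sqrt a ≤ Real.sqrt (α ^ 2) := Real.sqrt_le_sqrt ha
    _ = α := Real.sqrt_sq hα.le
  have step1 : Real.sqrt a - Real.sqrt c ≤ (a - c) / ((1 + Real.sqrt 2) * α) :=
    scalar1 (hb0.trans hba) hca (by linarith) hγ0
  have step2 : Real.sqrt b - b / ((1 + Real.sqrt 2) * α) ≤ (2 - Real.sqrt 2) * α :=
    scalar2 hb0 (hba.trans ha) hα
  have hd : (a - c) / ((1 + Real.sqrt 2) * α) + b / ((1 + Real.sqrt 2) * α)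
      = (a + b - c) / ((1 + Real.sqrt 2) * α) := by ring
  linarith

lemma per_j {a b c α : ℝ} (hα : 0 < α) (ha0 : 0 ≤ a) (hb0 : 0 ≤ b) (ha : a ≤ α ^ 2)
    (hb : b ≤ α ^ 2) (hc2 : c ≤ 2 * α ^ 2) (hca : a ≤ c) (hcb : b ≤ c) :
    Real.sqrt a + Real.sqrt b - Real.sqrt c ≤
      (2 - Real.sqrt 2) * α + (a + b - c) / ((1 + Real.sqrt 2) * α) := by
  rcases le_total b a with h | h
  · exact per_j_asym hα hb0 h ha hc2 hca
  · have := per_j_asym hα ha0 h hb hc2 hcb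
    calc Real.sqrt a + Real.sqrt b - Real.sqrt c
        = Real.sqrt b + Real.sqrt a - Real.sqrt c := by ring
    _ ≤ (2 - Real.sqrt 2) * α + (b + a - c) / ((1 + Real.sqrt 2) * α) := this
    _ = (2 - Real.sqrt 2) * α + (a + b - c) / ((1 + Real.sqrt 2) * α) := by ring

section helpers
variable {d : ℕ}

lemma dot_mulVec_star {U : Matrix (Fin d) (Fin d) ℝ} (w z : Fin d → ℝ) :
    w ⬝ᵥ (U *ᵥ z) = ((star U) *ᵥ w) ⬝ᵥ z := by
  rw [Matrix.star_eq_conjTranspose]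
  have h : Uᴴ = Uᵀ := by ext i j; simp [conjTranspose_apply]
  rw [h, dotProduct_comm ((Uᵀ *ᵥ w)) z, Matrix.dotProduct_mulVec, Matrix.mulVec_transpose,
    dotProduct_comm]

lemma dot_diag_rep {S : Matrix (Fin d) (Fin d) ℝ} (hS : S.IsHermitian) (w : Fin d → ℝ) :
    w ⬝ᵥ (S *ᵥ w) =
      ∑ l, hS.eigenvalues l * ((star (hS.eigenvectorUnitary : Matrix (Fin d) (Fin d) ℝ)) *ᵥ w) l ^ 2 := by
  set U := (hS.eigenvectorUnitary : Matrix (Fin d) (Fin d) ℝ) with hU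
  set x := (star U) *ᵥ w with hx
  nth_rewrite 1 [hS.spectral_theorem, Unitary.conjStarAlgAut_apply]
  rw [← Matrix.mulVec_mulVec, ← Matrix.mulVec_mulVec, dot_mulVec_star, ← hU, ← hx]
  have : (Matrix.diagonal (RCLike.ofReal ∘ hS.eigenvalues) : Matrix (Fin d) (Fin d) ℝ)
      = Matrix.diagonal hS.eigenvalues := by
    congr 1
  rw [this]
  simp [dotProduct, Matrix.mulVec_diagonal]
  exact Finset.sum_congr rfl fun l _ => by ring

lemma dot_star_mulVec_self {U : Matrix (Fin d) (Fin d) ℝ} (hU : U ∈ Matrix.unitaryGroup (Fin d) ℝ)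
    (w : Fin d → ℝ) : ((star U) *ᵥ w) ⬝ᵥ ((star U) *ᵥ w) = w ⬝ᵥ w := by
  rw [← dot_mulVec_star, Matrix.mulVec_mulVec]
  have : U * (star U) = 1 := (Matrix.mem_unitaryGroup_iff).mp hU
  rw [this, Matrix.one_mulVec]

lemma dot_rayleigh_le {S : Matrix (Fin d) (Fin d) ℝ} (hS : S.IsHermitian) {β : ℝ}
    (h : ∀ l, hS.eigenvalues l ≤ β) (w : Fin d → ℝ) :
    w ⬝ᵥ (S *ᵥ w) ≤ β * (w ⬝ᵥ w) := by
  set x := (star (hS.eigenvectorUnitary : Matrix (Fin d) (Fin d) ℝ)) *ᵥ w with hx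
  rw [dot_diag_rep hS w, ← dot_star_mulVec_self (hS.eigenvectorUnitary).2 w, ← hx]
  rw [show x ⬝ᵥ x = ∑ l, x l ^ 2 from Finset.sum_congr rfl fun l _ => (sq (x l)).symm,
    Finset.mul_sum]
  exact Finset.sum_le_sum fun l _ => mul_le_mul_of_nonneg_right (h l) (sq_nonneg _)

lemma dot_basis_self {S : Matrix (Fin d) (Fin d) ℝ} (hS : S.IsHermitian) (l : Fin d) :
    (⇑(hS.eigenvectorBasis l) : Fin d → ℝ) ⬝ᵥ ⇑(hS.eigenvectorBasis l) = 1 := by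
  have h1 : (star (hS.eigenvectorUnitary : Matrix (Fin d) (Fin d) ℝ)) *
      (hS.eigenvectorUnitary : Matrix (Fin d) (Fin d) ℝ) = 1 := Unitary.coe_star_mul_self _
  have h2 := congrFun (congrFun h1 l) l
  simp only [Matrix.mul_apply, Matrix.one_apply_eq, Matrix.star_apply,
    Matrix.star_eq_conjTranspose, Matrix.conjTranspose_apply, star_trivial,
    Matrix.IsHermitian.eigenvectorUnitary_apply] at h2
  simpa [dotProduct] using h2

lemma eig_add_le {S T : Matrix (Fin d) (Fin d) ℝ} (hS : S.IsHermitian) (hT : T.IsHermitian)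
    (hC : (S + T).IsHermitian) {a b : ℝ} (ha : ∀ l, hS.eigenvalues l ≤ a)
    (hb : ∀ l, hT.eigenvalues l ≤ b) (l : Fin d) : hC.eigenvalues l ≤ a + b := by
  set u : Fin d → ℝ := ⇑(hC.eigenvectorBasis l) with hu
  have h1 : (S + T) *ᵥ u = hC.eigenvalues l • u := hC.mulVec_eigenvectorBasis l
  have h2 : u ⬝ᵥ u = 1 := dot_basis_self hC l
  have h3 : u ⬝ᵥ ((S + T) *ᵥ u) = hC.eigenvalues l := by
    rw [h1, dotProduct_smul, smul_eq_mul, h2, mul_one]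
  have h4 : u ⬝ᵥ ((S + T) *ᵥ u) ≤ (a + b) * (u ⬝ᵥ u) := by
    rw [Matrix.add_mulVec, dotProduct_add, add_mul]
    exact add_le_add (dot_rayleigh_le hS ha u) (dot_rayleigh_le hT hb u)
  rw [h3, h2, mul_one] at h4
  exact h4

lemma eig_mono {S T : Matrix (Fin d) (Fin d) ℝ} (hS : S.IsHermitian) (hT : T.PosSemidef)
    (hC : (S + T).IsHermitian) (σ ρ : Equiv.Perm (Fin d))
    (hσ : Monotone (hS.eigenvalues ∘ σ)) (hρ : Monotone (hC.eigenvalues ∘ ρ)) (j : Fin d) :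
    hS.eigenvalues (σ j) ≤ hC.eigenvalues (ρ j) := by
  classical
  set U := (hS.eigenvectorUnitary : Matrix (Fin d) (Fin d) ℝ) with hUdef
  set V := (hC.eigenvectorUnitary : Matrix (Fin d) (Fin d) ℝ) with hVdef
  -- find a nonzero w in the intersection
  let f : (Fin d → ℝ) →ₗ[ℝ] ({i : Fin d // i ≠ j} → ℝ) :=
    { toFun := fun w i => if (i : Fin d) < j then ((star U) *ᵥ w) (σ i) else ((star V) *ᵥ w) (ρ i)
      map_add' := by
        intro a b; funext i
        by_cases h : (i : Fin d) < j <;> simp [Matrix.mulVec_add, h]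
      map_smul' := by
        intro c a; funext i
        by_cases h : (i : Fin d) < j <;> simp [Matrix.mulVec_smul, h] }
  have hd : 0 < d := j.pos
  have hcard : Fintype.card {i : Fin d // i ≠ j} = d - 1 := by
    rw [Fintype.card_subtype_compl, Fintype.card_subtype_eq, Fintype.card_fin]
  have hker : ∃ w : Fin d → ℝ, w ≠ 0 ∧ f w = 0 := by
    by_contra hcon
    push_neg at hcon
    have hinj : Function.Injective f := by
      rw [← LinearMap.ker_eq_bot, LinearMap.ker_eq_bot']
      intro w hw
      by_contra hw0
      exact (hcon w hw0) hw
    have := LinearMap.finrank_le_finrank_of_injective hinj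
    rw [Module.finrank_pi, Module.finrank_pi, Fintype.card_fin, hcard] at this
    omega
  obtain ⟨w, hw0, hfw⟩ := hker
  set x := (star U) *ᵥ w with hx
  set y := (star V) *ᵥ w with hy
  have hx0 : ∀ i : Fin d, i < j → x (σ i) = 0 := by
    intro i hij
    have := congrFun hfw ⟨i, ne_of_lt hij⟩
    simpa [f, hij] using this
  have hy0 : ∀ i : Fin d, j < i → y (ρ i) = 0 := by
    intro i hij
    have := congrFun hfw ⟨i, (ne_of_lt hij).symm⟩
    simpa [f, not_lt_of_gt hij] using this
  have hN : 0 < w ⬝ᵥ w := by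
    have h1 : 0 ≤ w ⬝ᵥ w := Finset.sum_nonneg fun i _ => mul_self_nonneg _
    have h2 : w ⬝ᵥ w ≠ 0 := fun h => hw0 (dotProduct_self_eq_zero.mp h)
    exact lt_of_le_of_ne h1 (Ne.symm h2)
  have key1 : w ⬝ᵥ (S *ᵥ w) = ∑ l, hS.eigenvalues l * x l ^ 2 := dot_diag_rep hS w
  have keyx : x ⬝ᵥ x = w ⬝ᵥ w := dot_star_mulVec_self (hS.eigenvectorUnitary).2 w
  have key2 : w ⬝ᵥ ((S + T) *ᵥ w) = ∑ l, hC.eigenvalues l * y l ^ 2 := dot_diag_rep hC w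
  have keyy : y ⬝ᵥ y = w ⬝ᵥ w := dot_star_mulVec_self (hC.eigenvectorUnitary).2 w
  have hlow : hS.eigenvalues (σ j) * (w ⬝ᵥ w) ≤ w ⬝ᵥ (S *ᵥ w) := by
    rw [key1, ← keyx]
    have e1 : ∑ l, hS.eigenvalues l * x l ^ 2 = ∑ i, hS.eigenvalues (σ i) * x (σ i) ^ 2 :=
      (Equiv.sum_comp σ (fun l => hS.eigenvalues l * x l ^ 2)).symm
    have e2 : x ⬝ᵥ x = ∑ i, x (σ i) ^ 2 := by
      rw [show x ⬝ᵥ x = ∑ l, x l ^ 2 from Finset.sum_congr rfl fun l _ => (sq (x l)).symm]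
      exact (Equiv.sum_comp σ (fun l => x l ^ 2)).symm
    rw [e1, e2, Finset.mul_sum]
    refine Finset.sum_le_sum fun i _ => ?_
    rcases lt_or_ge i j with h | h
    · rw [hx0 i h]; simp
    · exact mul_le_mul_of_nonneg_right (hσ h) (sq_nonneg _)
  have hup : w ⬝ᵥ ((S + T) *ᵥ w) ≤ hC.eigenvalues (ρ j) * (w ⬝ᵥ w) := by
    rw [key2, ← keyy]
    have e1 : ∑ l, hC.eigenvalues l * y l ^ 2 = ∑ i, hC.eigenvalues (ρ i) * y (ρ i) ^ 2 :=
      (Equiv.sum_comp ρ (fun l => hC.eigenvalues l * y l ^ 2)).symm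
    have e2 : y ⬝ᵥ y = ∑ i, y (ρ i) ^ 2 := by
      rw [show y ⬝ᵥ y = ∑ l, y l ^ 2 from Finset.sum_congr rfl fun l _ => (sq (y l)).symm]
      exact (Equiv.sum_comp ρ (fun l => y l ^ 2)).symm
    rw [e1, e2, Finset.mul_sum]
    refine Finset.sum_le_sum fun i _ => ?_
    rcases lt_or_ge j i with h | h
    · rw [hy0 i h]; simp
    · exact mul_le_mul_of_nonneg_right (hρ h) (sq_nonneg _)
  have hmid : w ⬝ᵥ (S *ᵥ w) ≤ w ⬝ᵥ ((S + T) *ᵥ w) := by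
    rw [Matrix.add_mulVec, dotProduct_add]
    have h0 : 0 ≤ w ⬝ᵥ (T *ᵥ w) := by have := hT.dotProduct_mulVec_nonneg w; simpa using this
    linarith
  have := (hlow.trans hmid).trans hup
  exact le_of_mul_le_mul_right this hN

lemma eig_congr {M N : Matrix (Fin d) (Fin d) ℝ} (h : M = N) (hM : M.IsHermitian)
    (hN : N.IsHermitian) : hM.eigenvalues = hN.eigenvalues := by subst h; rfl

lemma trace_eq_sum_eig {S : Matrix (Fin d) (Fin d) ℝ} (hS : S.IsHermitian) :
    S.trace = ∑ l, hS.eigenvalues l := by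
  nth_rewrite 1 [hS.spectral_theorem, Unitary.conjStarAlgAut_apply]
  rw [Matrix.trace_mul_comm, ← mul_assoc]
  have : (star (hS.eigenvectorUnitary : Matrix (Fin d) (Fin d) ℝ)) *
      (hS.eigenvectorUnitary : Matrix (Fin d) (Fin d) ℝ) = 1 := Unitary.coe_star_mul_self _
  rw [this, one_mul, Matrix.trace_diagonal]
  simp

lemma class_bound {n m : ℕ} (A : Matrix (Fin d) (Fin n) ℝ) (B : Matrix (Fin d) (Fin m) ℝ)
    {α : ℝ} (hα : 0 < α) (hA : ∀ j, singularValues A j ≤ α) (hB : ∀ j, singularValues B j ≤ α) :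
    nuclearNorm A + nuclearNorm B - nuclearNorm (Matrix.fromCols A B) ≤
      (2 - Real.sqrt 2) * α * d := by
  classical
  have hSh : (A * Aᴴ).IsHermitian := isHermitian_mul_conjTranspose_self A
  have hTh : (B * Bᴴ).IsHermitian := isHermitian_mul_conjTranspose_self B
  have hSp : (A * Aᴴ).PosSemidef := posSemidef_self_mul_conjTranspose A
  have hTp : (B * Bᴴ).PosSemidef := posSemidef_self_mul_conjTranspose B
  have hCh : (A * Aᴴ + B * Bᴴ).IsHermitian := hSh.add hTh
  have hZ : Matrix.fromCols A B * (Matrix.fromCols A B)ᴴ = A * Aᴴ + B * Bᴴ := by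
    rw [Matrix.conjTranspose_fromCols_eq_fromRows_conjTranspose,
      Matrix.fromCols_mul_fromRows]
  have hnnZ : nuclearNorm (Matrix.fromCols A B) = ∑ j, Real.sqrt (hCh.eigenvalues j) := by
    unfold nuclearNorm singularValues
    exact Finset.sum_congr rfl fun j _ => by
      rw [eig_congr hZ (isHermitian_mul_conjTranspose_self _) hCh]
  have hnnA : nuclearNorm A = ∑ j, Real.sqrt (hSh.eigenvalues j) := rfl
  have hnnB : nuclearNorm B = ∑ j, Real.sqrt (hTh.eigenvalues j) := rfl
  have hevS0 : ∀ j, 0 ≤ hSh.eigenvalues j := fun j => hSp.eigenvalues_nonneg j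
  have hevT0 : ∀ j, 0 ≤ hTh.eigenvalues j := fun j => hTp.eigenvalues_nonneg j
  have hevSα : ∀ j, hSh.eigenvalues j ≤ α ^ 2 := fun j => by
    have h1 := hA j
    have h2 := Real.sq_sqrt (hevS0 j)
    unfold singularValues at h1
    nlinarith [Real.sqrt_nonneg (hSh.eigenvalues j)]
  have hevTα : ∀ j, hTh.eigenvalues j ≤ α ^ 2 := fun j => by
    have h1 := hB j
    have h2 := Real.sq_sqrt (hevT0 j)
    unfold singularValues at h1
    nlinarith [Real.sqrt_nonneg (hTh.eigenvalues j)]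
  have hevC2 : ∀ l, hCh.eigenvalues l ≤ 2 * α ^ 2 := fun l => by
    have := eig_add_le hSh hTh hCh hevSα hevTα l
    linarith
  have htr : ∑ l, hCh.eigenvalues l = ∑ l, hSh.eigenvalues l + ∑ l, hTh.eigenvalues l := by
    rw [← trace_eq_sum_eig hSh, ← trace_eq_sum_eig hTh, ← trace_eq_sum_eig hCh,
      Matrix.trace_add]
  set σ := Tuple.sort hSh.eigenvalues with hσdef
  set τ := Tuple.sort hTh.eigenvalues with hτdef
  set ρ := Tuple.sort hCh.eigenvalues with hρdef
  have hσ : Monotone (hSh.eigenvalues ∘ σ) := Tuple.monotone_sort _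
  have hτ : Monotone (hTh.eigenvalues ∘ τ) := Tuple.monotone_sort _
  have hρ : Monotone (hCh.eigenvalues ∘ ρ) := Tuple.monotone_sort _
  have hmono1 : ∀ j, hSh.eigenvalues (σ j) ≤ hCh.eigenvalues (ρ j) :=
    fun j => eig_mono hSh hTp hCh σ ρ hσ hρ j
  have hmono2 : ∀ j, hTh.eigenvalues (τ j) ≤ hCh.eigenvalues (ρ j) := fun j => by
    have hC' : (B * Bᴴ + A * Aᴴ).IsHermitian := hTh.add hSh
    have heq : hC'.eigenvalues = hCh.eigenvalues := eig_congr (add_comm _ _) hC' hCh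
    have hρ' : Monotone (hC'.eigenvalues ∘ ρ) := by rw [heq]; exact hρ
    have := eig_mono hTh hSp hC' τ ρ hτ hρ' j
    rwa [heq] at this
  have e1 : ∑ j, Real.sqrt (hSh.eigenvalues j) = ∑ j, Real.sqrt (hSh.eigenvalues (σ j)) :=
    (Equiv.sum_comp σ _).symm
  have e2 : ∑ j, Real.sqrt (hTh.eigenvalues j) = ∑ j, Real.sqrt (hTh.eigenvalues (τ j)) :=
    (Equiv.sum_comp τ _).symm
  have e3 : ∑ j, Real.sqrt (hCh.eigenvalues j) = ∑ j, Real.sqrt (hCh.eigenvalues (ρ j)) :=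
    (Equiv.sum_comp ρ _).symm
  rw [hnnA, hnnB, hnnZ, e1, e2, e3]
  have step : ∑ j, Real.sqrt (hSh.eigenvalues (σ j)) + ∑ j, Real.sqrt (hTh.eigenvalues (τ j))
      - ∑ j, Real.sqrt (hCh.eigenvalues (ρ j))
      ≤ ∑ j : Fin d, ((2 - Real.sqrt 2) * α +
        (hSh.eigenvalues (σ j) + hTh.eigenvalues (τ j) - hCh.eigenvalues (ρ j)) /
          ((1 + Real.sqrt 2) * α)) := by
    rw [← Finset.sum_add_distrib, ← Finset.sum_sub_distrib]
    exact Finset.sum_le_sum fun j _ => per_j hα (hevS0 _) (hevT0 _) (hevSα _) (hevTα _)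
      (hevC2 _) (hmono1 j) (hmono2 j)
  refine step.trans ?_
  rw [Finset.sum_add_distrib, ← Finset.sum_div, Finset.sum_sub_distrib]
  have hnum : ∑ x : Fin d, (hSh.eigenvalues (σ x) + hTh.eigenvalues (τ x))
      - ∑ x : Fin d, hCh.eigenvalues (ρ x) = 0 := by
    rw [Finset.sum_add_distrib, Equiv.sum_comp σ (hSh.eigenvalues),
      Equiv.sum_comp τ (hTh.eigenvalues), Equiv.sum_comp ρ (hCh.eigenvalues), htr]
    ring
  rw [hnum, zero_div, add_zero, Finset.sum_const, Finset.card_univ, Fintype.card_fin,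
    nsmul_eq_mul]
  exact le_of_eq (by ring)

end helpers

theorem transferability_objective_bounded {d k : ℕ} {ns nt : Fin k → ℕ} {α lam : ℝ}
    (Zs : ∀ i : Fin k, Matrix (Fin d) (Fin (ns i)) ℝ)
    (Zt : ∀ i : Fin k, Matrix (Fin d) (Fin (nt i)) ℝ)
    (hdn : ∀ i, d ≤ ns i) (hdm : ∀ i, d ≤ nt i) (hα : 0 < α) (hlam : 0 ≤ lam)
    (hs : ∀ i j, singularValues (Zs i) j ≤ α)
    (ht : ∀ i j, singularValues (Zt i) j ≤ α) :
    lam * ∑ i, (nuclearNorm (Zs i) + nuclearNorm (Zt i) -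
        nuclearNorm (Matrix.fromCols (Zs i) (Zt i))) ≤
      lam * ((2 - Real.sqrt 2) * α * k * d) := by
  have hbound : ∀ i : Fin k, nuclearNorm (Zs i) + nuclearNorm (Zt i) -
      nuclearNorm (Matrix.fromCols (Zs i) (Zt i)) ≤ (2 - Real.sqrt 2) * α * d :=
    fun i => class_bound (Zs i) (Zt i) hα (hs i) (ht i)
  have hsum : ∑ i, (nuclearNorm (Zs i) + nuclearNorm (Zt i) -
      nuclearNorm (Matrix.fromCols (Zs i) (Zt i))) ≤
      ∑ _i : Fin k, ((2 - Real.sqrt 2) * α * d) :=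
    Finset.sum_le_sum fun i _ => hbound i
  have hconst : ∑ _i : Fin k, ((2 - Real.sqrt 2) * α * (d : ℝ)) =
      (2 - Real.sqrt 2) * α * k * d := by
    rw [Finset.sum_const, Finset.card_univ, Fintype.card_fin, nsmul_eq_mul]
    ring
  exact mul_le_mul_of_nonneg_left (hsum.trans_eq hconst) hlam
end
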